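/- (Regression: directional convergence.) Consider the regression adversarial covariate-shift dynamic x_{t+1} = x_t + 2γ·⟨x_t, θ⋆ − θ⁰⟩·(θ⋆ − θ⁰) in a real Hilbert space with θ⋆ ≠ θ⁰, γ > 0, and x_0 satisfying ⟨x_0, θ⋆ − θ⁰⟩ ≠ 0. Then |⟨x_T/‖x_T‖, Δ_b⟩| → 1 as T → ∞, where Δ_b = (θ⋆ − θ⁰)/‖θ⋆ − θ⁰‖. -/

import Mathlib

open scoped RealInnerProductSpace

/-- Regression: directional convergence of the adversarial covariate-shift dynamic
to the blessing direction. -/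
theorem regression_directional_convergence
    {H : Type*} [NormedAddCommGroup H] [InnerProductSpace ℝ H]
    (θs θ0 : H) (hne : θs ≠ θ0) (γ : ℝ) (hγ : 0 < γ)
    (x : ℕ → H)
    (hx : ∀ t : ℕ, x (t + 1) = x t + (2 * γ * ⟪x t, θs - θ0⟫) • (θs - θ0))
    (hx0 : ⟪x 0, θs - θ0⟫ ≠ 0) :
    Filter.Tendsto
      (fun T : ℕ => |⟪‖x T‖⁻¹ • x T, ‖θs - θ0‖⁻¹ • (θs - θ0)⟫|)
      Filter.atTop (nhds 1) := by
  set v : H := θs - θ0 with hv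
  have hvne : v ≠ 0 := sub_ne_zero.mpr hne
  have hvnorm : (0:ℝ) < ‖v‖ := norm_pos_iff.mpr hvne
  set r : ℝ := 1 + 2 * γ * ‖v‖ ^ 2 with hr
  have hr1 : 1 < r := by
    have : 0 < 2 * γ * ‖v‖ ^ 2 := by positivity
    rw [hr]; linarith
  have hrpos : (0:ℝ) < r := by linarith
  set c : ℝ := ⟪x 0, v⟫ with hc
  have ha : ∀ t, ⟪x t, v⟫ = c * r ^ t := by
    intro t; induction t with
    | zero => simp [hc]
    | succ t ih =>
      rw [hx t, inner_add_left, real_inner_smul_left, ih,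
        real_inner_self_eq_norm_sq]
      ring
  set w : H := x 0 - (c / ‖v‖ ^ 2) • v with hw
  have hwv : ⟪w, v⟫ = 0 := by
    rw [hw, inner_sub_left, real_inner_smul_left, real_inner_self_eq_norm_sq]
    field_simp
    simp [hc]
  have hxt : ∀ t, x t = w + ((c * r ^ t) / ‖v‖ ^ 2) • v := by
    intro t; induction t with
    | zero => simp [hw]
    | succ t ih =>
      rw [hx t, ha t, ih, add_assoc, ← add_smul]
      congr 1
      congr 1
      rw [hr]
      have := hvnorm.ne'
      field_simp
      ring
  set D : ℝ := ‖w‖ ^ 2 * ‖v‖ ^ 2 with hD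
  have hD0 : 0 ≤ D := by positivity
  set s : ℝ := (r ^ 2)⁻¹ with hs
  have hs0 : (0:ℝ) ≤ s := by positivity
  have hs1 : s < 1 := by
    rw [hs, inv_lt_one_iff₀]
    right; nlinarith
  have hnorm : ∀ t, ‖x t‖ ^ 2 * ‖v‖ ^ 2 = D + c ^ 2 * (r ^ t) ^ 2 := by
    intro t
    rw [hxt t, @norm_add_sq_real, real_inner_smul_right, hwv, norm_smul,
      mul_pow, Real.norm_eq_abs, sq_abs]
    field_simp
    ring
  have hxne : ∀ t, ‖x t‖ ^ 2 * ‖v‖ ^ 2 ≠ 0 := by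
    intro t
    rw [hnorm t]
    have : 0 < c ^ 2 * (r ^ t) ^ 2 := by positivity
    linarith
  have hxnorm : ∀ t, (0:ℝ) < ‖x t‖ := by
    intro t
    rcases (norm_nonneg (x t)).lt_or_eq with h | h
    · exact h
    · exfalso; apply hxne t; rw [← h]; ring
  have key : ∀ T, |⟪‖x T‖⁻¹ • x T, ‖v‖⁻¹ • v⟫| =
      Real.sqrt (c ^ 2 / (D * s ^ T + c ^ 2)) := by
    intro T
    rw [← Real.sqrt_sq_eq_abs]
    congr 1
    rw [real_inner_smul_left, real_inner_smul_right, ha T]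
    have hxT := hxnorm T
    have hrT : (0:ℝ) < r ^ T := by positivity
    have h1 : (‖x T‖⁻¹ * (‖v‖⁻¹ * (c * r ^ T))) ^ 2
        = c ^ 2 * (r ^ T) ^ 2 / (‖x T‖ ^ 2 * ‖v‖ ^ 2) := by
      field_simp
    have h2 : s ^ T = (r ^ (2 * T))⁻¹ := by
      rw [hs, inv_pow, ← pow_mul]
    rw [h1, hnorm T, h2, ← pow_mul]
    have hrT2 : (0:ℝ) < r ^ (2 * T) := by positivity
    rw [mul_comm T 2]
    field_simp
  have hf : Filter.Tendsto (fun T : ℕ => c ^ 2 / (D * s ^ T + c ^ 2))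
      Filter.atTop (nhds 1) := by
    have hden : Filter.Tendsto (fun T : ℕ => D * s ^ T + c ^ 2)
        Filter.atTop (nhds (D * 0 + c ^ 2)) :=
      (((tendsto_pow_atTop_nhds_zero_of_lt_one hs0 hs1).const_mul D).add
        tendsto_const_nhds)
    have hc2 : c ^ 2 ≠ 0 := pow_ne_zero 2 hx0
    have := Filter.Tendsto.div (tendsto_const_nhds (x := c ^ 2)) hden
      (by simpa using hc2)
    simp only [mul_zero, zero_add, div_self hc2] at this
    exact this
  have := (Real.continuous_sqrt.tendsto 1).comp hf
  simp only [Real.sqrt_one] at this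
  refine this.congr fun T => ?_
  exact (key T).symm
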